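/- Let q ≥ 2 and let ρ be a symmetric q×q matrix with nonnegative entries whose row sums satisfy Σ_j ρ_{ij} = ν_i for a positive probability vector ν. Fix φ ∈ (0,1], set ν̂₁ = ν₁/φ and ν̂_i = ν_i for i ≥ 2, and define M̂_{ij} = ρ_{ij}/√(ν̂_i ν̂_j). Let A = max_i {1 − (1−√φ)·ρ_{i1}/ν_i}. Then entrywise (M̂·√ν)₁ ≤ √φ·A·√ν₁ and (M̂·√ν)_i ≤ A·√ν_i for all i ≥ 2; in particular M̂√ν ≤ A√ν entrywise. -/

import Mathlib

open Matrix

/-- Let `ρ` be a symmetric nonnegative matrix with row sums `ν`, a positive probability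
vector, and `φ ∈ (0,1]`. With `νh₁ = ν₁/φ`, `νh_i = ν_i` for `i ≥ 2`,
`M̂_{ij} = ρ_{ij}/√(νh_i νh_j)` and `A = max_i {1 − (1−√φ)ρ_{i1}/ν_i}`, the entrywise bounds
`(M̂√ν)₁ ≤ √φ·A·√ν₁` and `(M̂√ν)_i ≤ A·√ν_i` for `i ≥ 2` hold; in particular
`M̂√ν ≤ A√ν` entrywise. -/
theorem stmt_17 {q : ℕ} (hq : 2 ≤ q)
    (ρ : Matrix (Fin q) (Fin q) ℝ) (hρsymm : ρ.IsSymm) (hρnn : ∀ i j, 0 ≤ ρ i j)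
    (ν : Fin q → ℝ) (hν : ∀ i, 0 < ν i) (hprob : ∑ i, ν i = 1)
    (hrow : ∀ i, ∑ j, ρ i j = ν i)
    (φ : ℝ) (hφ0 : 0 < φ) (hφ1 : φ ≤ 1)
    (νh : Fin q → ℝ)
    (hνh : ∀ i, νh i = if i = (⟨0, by omega⟩ : Fin q) then ν i / φ else ν i)
    (M : Matrix (Fin q) (Fin q) ℝ)
    (hM : ∀ i j, M i j = ρ i j / Real.sqrt (νh i * νh j))
    (A : ℝ)
    (hA : A = Finset.univ.sup' ⟨(⟨0, by omega⟩ : Fin q), Finset.mem_univ _⟩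
      (fun i => 1 - (1 - Real.sqrt φ) * ρ i ⟨0, by omega⟩ / ν i)) :
    ((M.mulVec fun j => Real.sqrt (ν j)) ⟨0, by omega⟩ ≤
        Real.sqrt φ * A * Real.sqrt (ν ⟨0, by omega⟩)) ∧
    (∀ i : Fin q, i ≠ (⟨0, by omega⟩ : Fin q) →
      (M.mulVec fun j => Real.sqrt (ν j)) i ≤ A * Real.sqrt (ν i)) ∧
    (∀ i, (M.mulVec fun j => Real.sqrt (ν j)) i ≤ A * Real.sqrt (ν i)) := by
  set z : Fin q := ⟨0, by omega⟩ with hz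
  have hφs : 0 < Real.sqrt φ := Real.sqrt_pos.2 hφ0
  have hφs1 : Real.sqrt φ ≤ 1 := by
    rw [show (1:ℝ) = Real.sqrt 1 by simp]; exact Real.sqrt_le_sqrt hφ1
  have hνs : ∀ i, 0 < Real.sqrt (ν i) := fun i => Real.sqrt_pos.2 (hν i)
  have hνhpos : ∀ i, 0 < νh i := by
    intro i; rw [hνh i]; split
    · exact div_pos (hν _) hφ0
    · exact hν i
  have hνhs : ∀ i, 0 < Real.sqrt (νh i) := fun i => Real.sqrt_pos.2 (hνhpos i)
  -- key value computation
  have key : ∀ i, (M.mulVec fun j => Real.sqrt (ν j)) i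
      = (ν i - (1 - Real.sqrt φ) * ρ i z) / Real.sqrt (νh i) := by
    intro i
    have hterm : ∀ j, M i j * Real.sqrt (ν j)
        = (ρ i j * (if j = z then Real.sqrt φ else 1)) / Real.sqrt (νh i) := by
      intro j
      rw [hM i j, Real.sqrt_mul (hνhpos i).le]
      by_cases hj : j = z
      · subst hj
        rw [if_pos rfl, hνh z, if_pos rfl, Real.sqrt_div (hν z).le]
        have h1 : Real.sqrt (ν z) ≠ 0 := (hνs z).ne'
        have h2 : Real.sqrt φ ≠ 0 := hφs.ne'
        have h3 : Real.sqrt (νh i) ≠ 0 := (hνhs i).ne'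
        field_simp
      · rw [if_neg hj, hνh j, if_neg hj]
        have h1 : Real.sqrt (ν j) ≠ 0 := (hνs j).ne'
        have h3 : Real.sqrt (νh i) ≠ 0 := (hνhs i).ne'
        field_simp
    have hsum : ∑ j, ρ i j * (if j = z then Real.sqrt φ else 1)
        = ν i - (1 - Real.sqrt φ) * ρ i z := by
      have : ∀ j ∈ Finset.univ, ρ i j * (if j = z then Real.sqrt φ else 1)
          = ρ i j - (if j = z then (1 - Real.sqrt φ) * ρ i j else 0) := by
        intro j _; by_cases hj : j = z <;> simp [hj] <;> ring
      rw [Finset.sum_congr rfl this, Finset.sum_sub_distrib, hrow i,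
        Finset.sum_ite_eq' Finset.univ z (fun j => (1 - Real.sqrt φ) * ρ i j)]
      simp
    simp only [Matrix.mulVec, dotProduct]
    rw [Finset.sum_congr rfl (fun j _ => hterm j), ← Finset.sum_div, hsum]
  have hfA : ∀ i, 1 - (1 - Real.sqrt φ) * ρ i z / ν i ≤ A := by
    intro i; rw [hA]
    exact Finset.le_sup' (fun i => 1 - (1 - Real.sqrt φ) * ρ i z / ν i) (Finset.mem_univ i)
  have hA0 : 0 ≤ A := by
    refine le_trans ?_ (hfA z)
    have hρle : ρ z z ≤ ν z := by
      rw [← hrow z]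
      exact Finset.single_le_sum (fun j _ => hρnn z j) (Finset.mem_univ z)
    have h1 : (1 - Real.sqrt φ) * ρ z z / ν z ≤ 1 := by
      rw [div_le_one (hν z)]
      calc (1 - Real.sqrt φ) * ρ z z ≤ 1 * ρ z z := by
            apply mul_le_mul_of_nonneg_right (by linarith) (hρnn z z)
        _ ≤ ν z := by rw [one_mul]; exact hρle
    linarith
  have hval : ∀ i, i ≠ z → (M.mulVec fun j => Real.sqrt (ν j)) i
      = Real.sqrt (ν i) * (1 - (1 - Real.sqrt φ) * ρ i z / ν i) := by
    intro i hi
    rw [key i, hνh i, if_neg hi]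
    have h1 : Real.sqrt (ν i) ≠ 0 := (hνs i).ne'
    have h2 : ν i ≠ 0 := (hν i).ne'
    have hsq : Real.sqrt (ν i) * Real.sqrt (ν i) = ν i := Real.mul_self_sqrt (hν i).le
    field_simp
    linear_combination (-(ν i - (1 - Real.sqrt φ) * ρ i z)) * hsq
  have hsecond : ∀ i : Fin q, i ≠ z →
      (M.mulVec fun j => Real.sqrt (ν j)) i ≤ A * Real.sqrt (ν i) := by
    intro i hi
    rw [hval i hi, mul_comm A]
    exact mul_le_mul_of_nonneg_left (hfA i) (hνs i).le
  have hfirst : (M.mulVec fun j => Real.sqrt (ν j)) z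
      ≤ Real.sqrt φ * A * Real.sqrt (ν z) := by
    have hvz : (M.mulVec fun j => Real.sqrt (ν j)) z
        = Real.sqrt φ * Real.sqrt (ν z) * (1 - (1 - Real.sqrt φ) * ρ z z / ν z) := by
      rw [key z, hνh z, if_pos rfl, Real.sqrt_div (hν z).le]
      have h1 : Real.sqrt (ν z) ≠ 0 := (hνs z).ne'
      have h2 : ν z ≠ 0 := (hν z).ne'
      have h3 : Real.sqrt φ ≠ 0 := hφs.ne'
      have hsq : Real.sqrt (ν z) * Real.sqrt (ν z) = ν z := Real.mul_self_sqrt (hν z).le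
      field_simp
      linear_combination (-(ν z - (1 - Real.sqrt φ) * ρ z z)) * hsq
    rw [hvz]
    calc Real.sqrt φ * Real.sqrt (ν z) * (1 - (1 - Real.sqrt φ) * ρ z z / ν z)
        ≤ Real.sqrt φ * Real.sqrt (ν z) * A :=
          mul_le_mul_of_nonneg_left (hfA z) (by positivity)
      _ = Real.sqrt φ * A * Real.sqrt (ν z) := by ring
  refine ⟨hfirst, hsecond, ?_⟩
  intro i
  by_cases hi : i = z
  · rw [hi]
    refine le_trans hfirst ?_
    calc Real.sqrt φ * A * Real.sqrt (ν z) ≤ 1 * A * Real.sqrt (ν z) := by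
          apply mul_le_mul_of_nonneg_right (mul_le_mul_of_nonneg_right hφs1 hA0) (hνs z).le
      _ = A * Real.sqrt (ν z) := by ring
  · exact hsecond i hi
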